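/- Let A, B, C, D, E be rational numbers such that B ≠ 0, or both A ≠ 0 and C ≠ 0. Then there is a constant C' > 0 (depending only on A, B, C, D, E) such that for every positive integer m, the function f(x₁,...,x_m) = (A·m + D)·Σ_{1≤i≤m} x_i² + B·Σ_{1≤i≤m} x_i³ + C·Σ_{1≤i<j≤m} x_i x_j (x_i − x_j) + E takes at least C'·m³ distinct values on the set of integer vectors (x₁,...,x_m) with x₁,...,x_m ≥ 0 and x₁ + ... + x_m = m. -/

import Mathlib

namespace S10

def s1 (l : List ℕ) : ℚ := (l.map fun a : ℕ => (a:ℚ)).sum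
def s2 (l : List ℕ) : ℚ := (l.map fun a : ℕ => (a:ℚ)^2).sum
def s3 (l : List ℕ) : ℚ := (l.map fun a : ℕ => (a:ℚ)^3).sum
def sS : List ℕ → ℚ
  | [] => 0
  | a :: t => (a:ℚ)^2 * s1 t - (a:ℚ) * s2 t + sS t

@[simp] lemma s1_nil : s1 [] = 0 := rfl
@[simp] lemma s2_nil : s2 [] = 0 := rfl
@[simp] lemma s3_nil : s3 [] = 0 := rfl
@[simp] lemma sS_nil : sS [] = 0 := rfl
@[simp] lemma s1_cons (a : ℕ) (t : List ℕ) : s1 (a :: t) = a + s1 t := by simp [s1]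
@[simp] lemma s2_cons (a : ℕ) (t : List ℕ) : s2 (a :: t) = (a:ℚ)^2 + s2 t := by simp [s2]
@[simp] lemma s3_cons (a : ℕ) (t : List ℕ) : s3 (a :: t) = (a:ℚ)^3 + s3 t := by simp [s3]
@[simp] lemma sS_cons (a : ℕ) (t : List ℕ) :
    sS (a :: t) = (a:ℚ)^2 * s1 t - (a:ℚ) * s2 t + sS t := rfl
@[simp] lemma s1_append (l₁ l₂ : List ℕ) : s1 (l₁ ++ l₂) = s1 l₁ + s1 l₂ := by simp [s1]
@[simp] lemma s2_append (l₁ l₂ : List ℕ) : s2 (l₁ ++ l₂) = s2 l₁ + s2 l₂ := by simp [s2]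
@[simp] lemma s3_append (l₁ l₂ : List ℕ) : s3 (l₁ ++ l₂) = s3 l₁ + s3 l₂ := by simp [s3]
@[simp] lemma s1_replicate (n a : ℕ) : s1 (List.replicate n a) = n * a := by
  induction n with
  | zero => simp
  | succ n ih => rw [List.replicate_succ, s1_cons, ih]; push_cast; ring
@[simp] lemma s2_replicate (n a : ℕ) : s2 (List.replicate n a) = n * (a:ℚ)^2 := by
  induction n with
  | zero => simp
  | succ n ih => rw [List.replicate_succ, s2_cons, ih]; push_cast; ring
@[simp] lemma s3_replicate (n a : ℕ) : s3 (List.replicate n a) = n * (a:ℚ)^3 := by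
  induction n with
  | zero => simp
  | succ n ih => rw [List.replicate_succ, s3_cons, ih]; push_cast; ring
@[simp] lemma sS_append (l₁ l₂ : List ℕ) :
    sS (l₁ ++ l₂) = sS l₁ + sS l₂ + s2 l₁ * s1 l₂ - s1 l₁ * s2 l₂ := by
  induction l₁ with
  | nil => simp
  | cons a t ih => simp only [List.cons_append, sS_cons, s1_append, s2_append, ih,
      s1_cons, s2_cons]; ring
@[simp] lemma sS_replicate (n a : ℕ) : sS (List.replicate n a) = 0 := by
  induction n with
  | zero => simp
  | succ n ih => rw [List.replicate_succ, sS_cons, ih, s1_replicate, s2_replicate]; ring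

def lst (a b c d q r : ℕ) : List ℕ :=
  List.replicate a 1 ++ [2] ++ List.replicate b 1 ++ [q] ++ List.replicate c 1 ++ [r]
    ++ List.replicate d 1

lemma sS_lst (a b c d q r : ℕ) : sS (lst a b c d q r) =
    -2*(a:ℚ)+2*(b:ℚ)+2*(c:ℚ)+2*(d:ℚ) + ((q:ℚ)^2-q)*(-(a:ℚ)-b+c+d)
      + ((r:ℚ)^2-r)*(-(a:ℚ)-b-c+d)
      + (4*q-2*(q:ℚ)^2+4*r-2*(r:ℚ)^2+(q:ℚ)^2*r-(q:ℚ)*(r:ℚ)^2) := by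
  simp [lst]; push_cast; ring

lemma s2_lst (a b c d q r : ℕ) : s2 (lst a b c d q r) =
    (a:ℚ) + b + c + d + 4 + (q:ℚ)^2 + (r:ℚ)^2 := by
  simp [lst]; push_cast; ring

lemma s3_lst (a b c d q r : ℕ) : s3 (lst a b c d q r) =
    (a:ℚ) + b + c + d + 8 + (q:ℚ)^3 + (r:ℚ)^3 := by
  simp [lst]; push_cast; ring

lemma sum_lst (a b c d q r : ℕ) : (lst a b c d q r).sum = a + b + c + d + 2 + q + r := by
  simp [lst, List.sum_replicate]; ring

lemma length_lst (a b c d q r : ℕ) : (lst a b c d q r).length = a + b + c + d + 3 := by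
  simp [lst]; ring


-- bridge lemmas
lemma sum_getD {M : Type*} [AddCommMonoid M] (g : ℕ → M) (hg : g 0 = 0) :
    ∀ (l : List ℕ) (m : ℕ), l.length ≤ m →
      (∑ i : Fin m, g (l.getD (i : ℕ) 0)) = (l.map g).sum
  | [], m, _ => by simp [hg]
  | a :: t, 0, h => by simp at h
  | a :: t, m+1, h => by
      rw [Fin.sum_univ_succ]
      simp only [Fin.val_zero, List.getD_cons_zero, Fin.val_succ, List.getD_cons_succ]
      rw [sum_getD g hg t m (by simpa using h)]
      simp

def G (a b : ℕ) : ℚ := (a:ℚ) * b * ((a:ℚ) - b)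

@[simp] lemma G_zero_left (b : ℕ) : G 0 b = 0 := by simp [G]
@[simp] lemma G_zero_right (a : ℕ) : G a 0 = 0 := by simp [G]

lemma map_G_sum (a : ℕ) (t : List ℕ) :
    ((t.map (G a)).sum) = (a:ℚ)^2 * s1 t - (a:ℚ) * s2 t := by
  induction t with
  | nil => simp
  | cons b t ih => simp only [List.map_cons, List.sum_cons, ih, s1_cons, s2_cons, G]; ring

lemma sum_pairs :
    ∀ (l : List ℕ) (m : ℕ), l.length ≤ m →
      (∑ i : Fin m, ∑ j : Fin m,
        if i < j then G (l.getD (i:ℕ) 0) (l.getD (j:ℕ) 0) else 0) = sS l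
  | [], m, _ => by simp
  | a :: t, 0, h => by simp at h
  | a :: t, m+1, h => by
      have ht : t.length ≤ m := by simpa using h
      rw [Fin.sum_univ_succ]
      have h0 : (∑ j : Fin (m+1),
          if (0 : Fin (m+1)) < j then G ((a::t).getD (((0:Fin (m+1))):ℕ) 0) ((a::t).getD ((j:ℕ)) 0) else 0)
          = (a:ℚ)^2 * s1 t - (a:ℚ) * s2 t := by
        rw [Fin.sum_univ_succ]
        simp only [Fin.val_zero, List.getD_cons_zero, Fin.val_succ, List.getD_cons_succ,
          lt_self_iff_false, if_false, Fin.succ_pos, if_true, zero_add]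
        rw [sum_getD (G a) (by simp) t m ht, map_G_sum]
      rw [h0]
      congr 1
      have hrest : ∀ i : Fin m, (∑ j : Fin (m+1),
          if (i.succ : Fin (m+1)) < j then G ((a::t).getD (((i.succ : Fin (m+1))):ℕ) 0) ((a::t).getD ((j:ℕ)) 0) else 0)
          = ∑ j : Fin m, if i < j then G (t.getD ((i:ℕ)) 0) (t.getD ((j:ℕ)) 0) else 0 := by
        intro i
        rw [Fin.sum_univ_succ]
        simp only [Fin.val_succ, List.getD_cons_succ, Fin.not_lt_zero, if_false, zero_add,
          Fin.succ_lt_succ_iff, Fin.val_zero]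
      rw [Finset.sum_congr rfl fun i _ => hrest i]
      exact sum_pairs t m ht

def img (A B C D E : ℚ) (m : ℕ) : Set ℚ :=
  (fun x : Fin m → ℕ =>
      (A * (m : ℚ) + D) * ∑ i : Fin m, (x i : ℚ) ^ 2
    + B * ∑ i : Fin m, (x i : ℚ) ^ 3
    + C * ∑ i : Fin m, ∑ j : Fin m,
        (if i < j then (x i : ℚ) * (x j : ℚ) * ((x i : ℚ) - (x j : ℚ)) else 0)
    + E) '' {x : Fin m → ℕ | ∑ i : Fin m, x i = m}

lemma mem_img {A B C D E : ℚ} {m : ℕ} {l : List ℕ} (hl : l.length ≤ m) (hs : l.sum = m) :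
    (A * (m:ℚ) + D) * s2 l + B * s3 l + C * sS l + E ∈ img A B C D E m := by
  refine ⟨fun i => l.getD ((i:ℕ)) 0, ?_, ?_⟩
  · show (∑ i : Fin m, l.getD ((i:ℕ)) 0) = m
    have := sum_getD (M := ℕ) id rfl l m hl
    simpa using this.trans (by simp [hs])
  · have h2 := sum_getD (fun a => (a:ℚ)^2) (by norm_num) l m hl
    have h3 := sum_getD (fun a => (a:ℚ)^3) (by norm_num) l m hl
    have hp := sum_pairs l m hl
    simp only [G] at hp
    simp only []
    rw [h2, h3, hp]
    unfold s2 s3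
    rfl

lemma img_finite (A B C D E : ℚ) (m : ℕ) : (img A B C D E m).Finite := by
  apply Set.Finite.image
  have hsub : {x : Fin m → ℕ | ∑ i : Fin m, x i = m}
      ⊆ Set.pi Set.univ (fun _ : Fin m => Set.Iic m) := by
    intro x hx i _
    simp only [Set.mem_Iic]
    calc x i ≤ ∑ j : Fin m, x j :=
          Finset.single_le_sum (fun j _ => Nat.zero_le _) (Finset.mem_univ i)
      _ = m := hx
  exact Set.Finite.subset (Set.Finite.pi fun _ => Set.finite_Iic m) hsub

lemma radix_lt {N Q R a b c a' b' c' : ℕ} (hQ : 2*N < Q) (hR : 2*N + Q*(2*N) < R)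
    (ha : a < N) (hb : b < N) (hlt : a+b+c < a'+b'+c') :
    2*a + Q*(a+b) + R*(a+b+c) < 2*a' + Q*(a'+b') + R*(a'+b'+c') := by
  have e1 : Q*(a+b) ≤ Q*(2*N) := Nat.mul_le_mul_left Q (by omega)
  have e2 : R*(a+b+c) + R ≤ R*(a'+b'+c') := by
    calc R*(a+b+c) + R = R*(a+b+c+1) := by ring
      _ ≤ R*(a'+b'+c') := Nat.mul_le_mul_left R (by omega)
  have t1 : 0 ≤ Q*(a'+b') := Nat.zero_le _
  linarith

lemma radix_lt2 {N Q a b a' b' : ℕ} (hQ : 2*N < Q) (ha : a < N) (hlt : a+b < a'+b') :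
    2*a + Q*(a+b) < 2*a' + Q*(a'+b') := by
  have e2 : Q*(a+b) + Q ≤ Q*(a'+b') := by
    calc Q*(a+b) + Q = Q*(a+b+1) := by ring
      _ ≤ Q*(a'+b') := Nat.mul_le_mul_left Q (by omega)
  linarith

lemma mixed_radix {N Q R a b c a' b' c' : ℕ} (hQ : 2*N < Q) (hR : 2*N + Q*(2*N) < R)
    (ha : a < N) (hb : b < N) (hc : c < N) (ha' : a' < N) (hb' : b' < N) (hc' : c' < N)
    (h : 2*a + Q*(a+b) + R*(a+b+c) = 2*a' + Q*(a'+b') + R*(a'+b'+c')) :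
    a = a' ∧ b = b' ∧ c = c' := by
  have h3 : a + b + c = a' + b' + c' := by
    rcases lt_trichotomy (a+b+c) (a'+b'+c') with hlt | heq | hgt
    · exact absurd h (Nat.ne_of_lt (radix_lt hQ hR ha hb hlt))
    · exact heq
    · exact absurd h.symm (Nat.ne_of_lt (radix_lt hQ hR ha' hb' hgt))
  have h2' : 2*a + Q*(a+b) = 2*a' + Q*(a'+b') := by
    have hr : R*(a+b+c) = R*(a'+b'+c') := by rw [h3]
    omega
  have h2 : a + b = a' + b' := by
    rcases lt_trichotomy (a+b) (a'+b') with hlt | heq | hgt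
    · exact absurd h2' (Nat.ne_of_lt (radix_lt2 hQ ha hlt))
    · exact heq
    · exact absurd h2'.symm (Nat.ne_of_lt (radix_lt2 hQ ha' hgt))
  have h1 : a = a' := by
    have hq : Q*(a+b) = Q*(a'+b') := by rw [h2]
    omega
  exact ⟨h1, by omega, by omega⟩

lemma val_lst (A B C D E : ℚ) (m a b c L q r : ℕ) (h : a+b+c ≤ L) :
    (A * (m:ℚ) + D) * s2 (lst a b c (L-(a+b+c)) q r) + B * s3 (lst a b c (L-(a+b+c)) q r)
      + C * sS (lst a b c (L-(a+b+c)) q r) + E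
    = ((A * (m:ℚ) + D) * ((L:ℚ) + 4 + (q:ℚ)^2 + (r:ℚ)^2)
        + B * ((L:ℚ) + 8 + (q:ℚ)^3 + (r:ℚ)^3)
        + C * ((2 + ((q:ℚ)^2-q) + ((r:ℚ)^2-r)) * (L:ℚ)
            + (4*(q:ℚ) - 2*(q:ℚ)^2 + 4*(r:ℚ) - 2*(r:ℚ)^2 + (q:ℚ)^2*r - (q:ℚ)*(r:ℚ)^2))
        + E)
      - 2*C*(2*(a:ℚ) + ((q:ℚ)^2-(q:ℚ))*((a:ℚ)+(b:ℚ)) + ((r:ℚ)^2-(r:ℚ))*((a:ℚ)+(b:ℚ)+(c:ℚ))) := by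
  rw [s2_lst, s3_lst, sS_lst, Nat.cast_sub h]
  push_cast
  ring

lemma main_C (A B C D E : ℚ) (hC : C ≠ 0) (m : ℕ) (hm : 600 ≤ m) :
    ((m:ℝ)/600)^3 ≤ ((img A B C D E m).ncard : ℝ) := by
  set N := m / 100 with hNdef
  have hN6 : 6 ≤ N := by omega
  have hNm : 100 * N ≤ m := by omega
  set s := Nat.sqrt (4*N) with hsdef
  have hs1 : s*s ≤ 4*N := Nat.sqrt_le (4*N)
  have hs2 : 4*N < (s+1)*(s+1) := Nat.lt_succ_sqrt (4*N)
  have hsN : s ≤ 2*N := by nlinarith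
  set q := s + 2 with hqdef
  set r := 7*N + 2 with hrdef
  have hbud : 2 + q + r + 3*N ≤ m := by omega
  set L := m - (2 + q + r) with hLdef
  have hL3N : 3*N ≤ L := by omega
  set Q := (s+2)*(s+1) with hQdef
  set R := (7*N+2)*(7*N+1) with hRdef
  have hQ : 2*N < Q := by rw [hQdef]; nlinarith
  have hQub : Q ≤ 10*N + 2 := by rw [hQdef]; nlinarith
  have hR : 2*N + Q*(2*N) < R := by
    have h1 : Q*(2*N) ≤ (10*N+2)*(2*N) := Nat.mul_le_mul_right (2*N) hQub
    rw [hRdef]; nlinarith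
  -- the family of values
  set F : Fin N × Fin N × Fin N → ℚ := fun p =>
    (A * (m:ℚ) + D) * s2 (lst p.1 p.2.1 p.2.2 (L-((p.1:ℕ)+(p.2.1:ℕ)+(p.2.2:ℕ))) q r)
      + B * s3 (lst p.1 p.2.1 p.2.2 (L-((p.1:ℕ)+(p.2.1:ℕ)+(p.2.2:ℕ))) q r)
      + C * sS (lst p.1 p.2.1 p.2.2 (L-((p.1:ℕ)+(p.2.1:ℕ)+(p.2.2:ℕ))) q r) + E with hF
  have hsum3 : ∀ p : Fin N × Fin N × Fin N, (p.1:ℕ)+(p.2.1:ℕ)+(p.2.2:ℕ) ≤ L := by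
    intro p
    have := p.1.isLt; have := p.2.1.isLt; have := p.2.2.isLt
    omega
  have hFval : ∀ p : Fin N × Fin N × Fin N, F p =
      ((A * (m:ℚ) + D) * ((L:ℚ) + 4 + (q:ℚ)^2 + (r:ℚ)^2)
        + B * ((L:ℚ) + 8 + (q:ℚ)^3 + (r:ℚ)^3)
        + C * ((2 + ((q:ℚ)^2-q) + ((r:ℚ)^2-r)) * (L:ℚ)
            + (4*(q:ℚ) - 2*(q:ℚ)^2 + 4*(r:ℚ) - 2*(r:ℚ)^2 + (q:ℚ)^2*r - (q:ℚ)*(r:ℚ)^2))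
        + E)
      - 2*C*((2*(p.1:ℕ) + Q*((p.1:ℕ)+(p.2.1:ℕ)) + R*((p.1:ℕ)+(p.2.1:ℕ)+(p.2.2:ℕ)) : ℕ) : ℚ) := by
    intro p
    simp only [hF]
    rw [val_lst A B C D E m (p.1:ℕ) (p.2.1:ℕ) (p.2.2:ℕ) L q r (hsum3 p)]
    congr 1
    push_cast [hQdef, hRdef, hqdef, hrdef]
    ring
  have hFinj : Function.Injective F := by
    intro p p' hpp
    rw [hFval p, hFval p'] at hpp
    have h2C : (2*C) ≠ 0 := mul_ne_zero two_ne_zero hC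
    have hple : ((2*(p.1:ℕ) + Q*((p.1:ℕ)+(p.2.1:ℕ)) + R*((p.1:ℕ)+(p.2.1:ℕ)+(p.2.2:ℕ)) : ℕ) : ℚ)
        = ((2*(p'.1:ℕ) + Q*((p'.1:ℕ)+(p'.2.1:ℕ)) + R*((p'.1:ℕ)+(p'.2.1:ℕ)+(p'.2.2:ℕ)) : ℕ) : ℚ) := by
      have h1 : (2*C) * ((2*(p.1:ℕ) + Q*((p.1:ℕ)+(p.2.1:ℕ)) + R*((p.1:ℕ)+(p.2.1:ℕ)+(p.2.2:ℕ)) : ℕ) : ℚ)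
          = (2*C) * ((2*(p'.1:ℕ) + Q*((p'.1:ℕ)+(p'.2.1:ℕ)) + R*((p'.1:ℕ)+(p'.2.1:ℕ)+(p'.2.2:ℕ)) : ℕ) : ℚ) := by
        linarith
      exact mul_left_cancel₀ h2C h1
    have hnat : (2*(p.1:ℕ) + Q*((p.1:ℕ)+(p.2.1:ℕ)) + R*((p.1:ℕ)+(p.2.1:ℕ)+(p.2.2:ℕ)))
        = (2*(p'.1:ℕ) + Q*((p'.1:ℕ)+(p'.2.1:ℕ)) + R*((p'.1:ℕ)+(p'.2.1:ℕ)+(p'.2.2:ℕ))) := by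
      exact_mod_cast hple
    obtain ⟨e1, e2, e3⟩ := mixed_radix hQ hR p.1.isLt p.2.1.isLt p.2.2.isLt
      p'.1.isLt p'.2.1.isLt p'.2.2.isLt hnat
    exact Prod.ext (Fin.ext e1) (Prod.ext (Fin.ext e2) (Fin.ext e3))
  -- the finset of values
  set T : Finset ℚ := Finset.image F Finset.univ with hT
  have hTcard : T.card = N^3 := by
    rw [hT, Finset.card_image_of_injective _ hFinj, Finset.card_univ]
    simp [Fintype.card_prod, Fintype.card_fin]
    ring
  have hTsub : ↑T ⊆ img A B C D E m := by
    intro x hx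
    simp only [hT, Finset.coe_image, Set.mem_image, Finset.mem_coe, Finset.coe_univ,
      Set.image_univ, Set.mem_range] at hx
    obtain ⟨p, rfl⟩ := hx
    rw [hF]
    apply mem_img
    · rw [length_lst]
      have := hsum3 p
      omega
    · rw [sum_lst]
      have := hsum3 p
      omega
  have hcount : (N^3 : ℕ) ≤ (img A B C D E m).ncard := by
    rw [← hTcard, ← Set.ncard_coe_finset T]
    exact Set.ncard_le_ncard hTsub (img_finite A B C D E m)
  have hreal : ((m:ℝ)/600)^3 ≤ ((N:ℝ))^3 := by
    apply pow_le_pow_left₀ (by positivity)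
    rw [div_le_iff₀ (by norm_num)]
    have : m ≤ 600 * N := by omega
    calc (m:ℝ) ≤ ((600*N : ℕ) : ℝ) := by exact_mod_cast Nat.cast_le.mpr this
      _ = (N:ℝ) * 600 := by push_cast; ring
  calc ((m:ℝ)/600)^3 ≤ ((N:ℝ))^3 := hreal
    _ = ((N^3 : ℕ) : ℝ) := by push_cast; ring
    _ ≤ ((img A B C D E m).ncard : ℝ) := Nat.cast_le.mpr hcount

def blk (c t : ℕ) : List ℕ :=
  List.replicate (7-t) c ++ List.replicate (7-t) (5*c) ++ List.replicate (7-t) (6*c)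
    ++ List.replicate t (2*c) ++ List.replicate t (3*c) ++ List.replicate t (7*c)

lemma s2_blk (c t : ℕ) (ht : t ≤ 7) : s2 (blk c t) = 434*(c:ℚ)^2 := by
  simp only [blk, s2_append, s2_replicate]
  rw [Nat.cast_sub ht]
  push_cast
  ring

lemma s3_blk (c t : ℕ) (ht : t ≤ 7) : s3 (blk c t) = 2394*(c:ℚ)^3 + 36*(t:ℚ)*(c:ℚ)^3 := by
  simp only [blk, s3_append, s3_replicate]
  rw [Nat.cast_sub ht]
  push_cast
  ring

lemma sum_blk (c t : ℕ) (ht : t ≤ 7) : (blk c t).sum = 84*c := by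
  simp only [blk, List.sum_append, List.sum_replicate, smul_eq_mul]
  set u := 7 - t with hu
  have hut : u + t = 7 := by omega
  calc u*c + u*(5*c) + u*(6*c) + t*(2*c) + t*(3*c) + t*(7*c) = 12*(u+t)*c := by ring
    _ = 84*c := by rw [hut]

lemma length_blk (c t : ℕ) (ht : t ≤ 7) : (blk c t).length = 21 := by
  simp only [blk, List.length_append, List.length_replicate]
  omega

lemma s2_flatten (LL : List (List ℕ)) : s2 (LL.flatten) = (LL.map s2).sum := by
  induction LL with
  | nil => simp
  | cons l t ih => simp [List.flatten_cons, s2_append, ih]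

lemma s3_flatten (LL : List (List ℕ)) : s3 (LL.flatten) = (LL.map s3).sum := by
  induction LL with
  | nil => simp
  | cons l t ih => simp [List.flatten_cons, s3_append, ih]

lemma geom2 (k : ℕ) : 1 + (∑ i ∈ Finset.range k, 2^i) = 2^k := by
  induction k with
  | zero => simp
  | succ k ih => rw [Finset.sum_range_succ]; rw [pow_succ]; omega

lemma main_B (A B D E : ℚ) (hB : B ≠ 0) (m : ℕ) (hm : 600 ≤ m) :
    ((m:ℝ)/600)^3 ≤ ((img A B 0 D E m).ncard : ℝ) := by
  set k := Nat.log 2 (m/84) with hkdef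
  have hk1 : 2^k ≤ m/84 := Nat.pow_log_le_self 2 (by omega)
  have hk2 : m/84 < 2^(k+1) := Nat.lt_pow_succ_log_self (by norm_num) _
  rw [pow_succ] at hk2
  set P := 2^k with hPdef
  have hkP : k < P := by rw [hPdef]; exact Nat.lt_two_pow_self
  have h84 : 84 * P ≤ m := by omega
  have hm168 : m < 168 * P := by omega
  set L := m - 84*(P - 1) with hLdef
  set F : (Fin k → Fin 8) → ℚ := fun j =>
    (A * (m:ℚ) + D) * s2 ((List.ofFn fun i : Fin k => blk (2^(i:ℕ)) ((j i):ℕ)).flatten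
        ++ List.replicate L 1)
      + B * s3 ((List.ofFn fun i : Fin k => blk (2^(i:ℕ)) ((j i):ℕ)).flatten
        ++ List.replicate L 1)
      + (0:ℚ) * sS ((List.ofFn fun i : Fin k => blk (2^(i:ℕ)) ((j i):ℕ)).flatten
        ++ List.replicate L 1) + E with hF
  have hj7 : ∀ (j : Fin k → Fin 8) (i : Fin k), ((j i):ℕ) ≤ 7 := fun j i => by omega
  have hFval : ∀ j, F j =
      ((A * (m:ℚ) + D) * ((∑ i : Fin k, 434*(((2:ℕ)^(i:ℕ):ℕ):ℚ)^2) + (L:ℚ))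
        + B * ((∑ i : Fin k, 2394*(((2:ℕ)^(i:ℕ):ℕ):ℚ)^3) + (L:ℚ)) + E)
      + 36 * B * ((∑ i : Fin k, ((j i):ℕ) * 8^(i:ℕ) : ℕ) : ℚ) := by
    intro j
    simp only [hF]
    rw [s2_append, s3_append, s2_flatten, s3_flatten, List.map_ofFn, List.map_ofFn,
      List.sum_ofFn, List.sum_ofFn]
    have e2 : ∀ i : Fin k, (s2 ∘ fun i : Fin k => blk (2^(i:ℕ)) ((j i):ℕ)) i
        = 434*(((2:ℕ)^(i:ℕ):ℕ):ℚ)^2 := fun i => s2_blk _ _ (hj7 j i)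
    have e3 : ∀ i : Fin k, (s3 ∘ fun i : Fin k => blk (2^(i:ℕ)) ((j i):ℕ)) i
        = 2394*(((2:ℕ)^(i:ℕ):ℕ):ℚ)^3 + 36*(((j i):ℕ):ℚ)*(((2:ℕ)^(i:ℕ):ℕ):ℚ)^3 :=
      fun i => s3_blk _ _ (hj7 j i)
    rw [Finset.sum_congr rfl fun i _ => e2 i, Finset.sum_congr rfl fun i _ => e3 i]
    rw [Finset.sum_add_distrib]
    have e4 : (∑ i : Fin k, 36*(((j i):ℕ):ℚ)*(((2:ℕ)^(i:ℕ):ℕ):ℚ)^3)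
        = 36 * ((∑ i : Fin k, ((j i):ℕ) * 8^(i:ℕ) : ℕ) : ℚ) := by
      push_cast
      rw [Finset.mul_sum]
      apply Finset.sum_congr rfl
      intro i _
      have h8 : ((8:ℚ))^(i:ℕ) = ((2:ℚ)^(i:ℕ))^3 := by
        have : (8:ℚ) = 2^3 := by norm_num
        rw [this, ← pow_mul, ← pow_mul, Nat.mul_comm]
      rw [h8]
      ring
    rw [e4, s2_replicate, s3_replicate]
    push_cast
    ring
  have hFinj : Function.Injective F := by
    intro j j' hjj
    rw [hFval j, hFval j'] at hjj
    have h36B : (36 * B) ≠ 0 := mul_ne_zero (by norm_num) hB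
    have hq : ((∑ i : Fin k, ((j i):ℕ) * 8^(i:ℕ) : ℕ) : ℚ)
        = ((∑ i : Fin k, ((j' i):ℕ) * 8^(i:ℕ) : ℕ) : ℚ) := by
      have h1 : (36*B) * ((∑ i : Fin k, ((j i):ℕ) * 8^(i:ℕ) : ℕ) : ℚ)
          = (36*B) * ((∑ i : Fin k, ((j' i):ℕ) * 8^(i:ℕ) : ℕ) : ℚ) := by linarith
      exact mul_left_cancel₀ h36B h1
    have hnat : (∑ i : Fin k, ((j i):ℕ) * 8^(i:ℕ)) = (∑ i : Fin k, ((j' i):ℕ) * 8^(i:ℕ)) := by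
      exact_mod_cast hq
    have : (finFunctionFinEquiv j : ℕ) = (finFunctionFinEquiv j' : ℕ) := by
      rw [finFunctionFinEquiv_apply, finFunctionFinEquiv_apply]
      exact hnat
    exact finFunctionFinEquiv.injective (Fin.val_injective this)
  set T : Finset ℚ := Finset.image F Finset.univ with hT
  have hTcard : T.card = 8^k := by
    rw [hT, Finset.card_image_of_injective _ hFinj, Finset.card_univ, Fintype.card_fun]
    simp
  have hTsub : ↑T ⊆ img A B 0 D E m := by
    intro x hx
    simp only [hT, Finset.coe_image, Set.mem_image, Finset.mem_coe, Finset.coe_univ,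
      Set.image_univ, Set.mem_range] at hx
    obtain ⟨j, rfl⟩ := hx
    rw [hF]
    apply mem_img
    · rw [List.length_append, List.length_replicate, List.length_flatten]
      have hlen : ((List.ofFn fun i : Fin k => blk (2^(i:ℕ)) ((j i):ℕ)).map List.length).sum
          = 21 * k := by
        rw [List.map_ofFn, List.sum_ofFn]
        have e : ∀ i : Fin k, (List.length ∘ fun i : Fin k => blk (2^(i:ℕ)) ((j i):ℕ)) i = 21 :=
          fun i => length_blk _ _ (hj7 j i)
        rw [Finset.sum_congr rfl fun i _ => e i]
        simp [Finset.sum_const, mul_comm]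
      rw [hlen]
      omega
    · rw [List.sum_append, List.sum_replicate, smul_eq_mul, List.sum_flatten]
      have hsum : ((List.ofFn fun i : Fin k => blk (2^(i:ℕ)) ((j i):ℕ)).map List.sum).sum
          = 84*(P-1) := by
        rw [List.map_ofFn, List.sum_ofFn]
        have e : ∀ i : Fin k, (List.sum ∘ fun i : Fin k => blk (2^(i:ℕ)) ((j i):ℕ)) i
            = 84 * 2^(i:ℕ) := fun i => sum_blk _ _ (hj7 j i)
        rw [Finset.sum_congr rfl fun i _ => e i, ← Finset.mul_sum]
        rw [Fin.sum_univ_eq_sum_range (fun i => 2^i) k]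
        have := geom2 k
        rw [hPdef]
        omega
      rw [hsum]
      omega
  have hcount : (8^k : ℕ) ≤ (img A B 0 D E m).ncard := by
    rw [← hTcard, ← Set.ncard_coe_finset T]
    exact Set.ncard_le_ncard hTsub (img_finite A B 0 D E m)
  have h8P : (8:ℕ)^k = P^3 := by
    rw [hPdef, ← pow_mul, show (8:ℕ) = 2^3 from rfl, ← pow_mul, Nat.mul_comm]
  have hreal : ((m:ℝ)/600)^3 ≤ ((P:ℝ))^3 := by
    apply pow_le_pow_left₀ (by positivity)
    rw [div_le_iff₀ (by norm_num)]
    have : m ≤ 600 * P := by omega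
    calc (m:ℝ) ≤ ((600*P : ℕ) : ℝ) := by exact_mod_cast Nat.cast_le.mpr this
      _ = (P:ℝ) * 600 := by push_cast; ring
  calc ((m:ℝ)/600)^3 ≤ ((P:ℝ))^3 := hreal
    _ = ((8^k : ℕ) : ℝ) := by rw [h8P]; push_cast; ring
    _ ≤ _ := Nat.cast_le.mpr hcount

lemma img_nonempty (A B C D E : ℚ) (m : ℕ) (hm : 0 < m) : (img A B C D E m).Nonempty := by
  refine ⟨_, mem_img (l := [m]) ?_ ?_⟩
  · simp; omega
  · simp

end S10

theorem stmt10 (A B C D E : ℚ) (h : B ≠ 0 ∨ (A ≠ 0 ∧ C ≠ 0)) :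
    ∃ C' : ℝ, 0 < C' ∧
      ∀ m : ℕ, 0 < m →
        C' * (m : ℝ) ^ 3 ≤
          (Set.ncard ((fun x : Fin m → ℕ =>
              (A * (m : ℚ) + D) * ∑ i : Fin m, (x i : ℚ) ^ 2
            + B * ∑ i : Fin m, (x i : ℚ) ^ 3
            + C * ∑ i : Fin m, ∑ j : Fin m,
                (if i < j then (x i : ℚ) * (x j : ℚ) * ((x i : ℚ) - (x j : ℚ)) else 0)
            + E) ''
            {x : Fin m → ℕ | ∑ i : Fin m, x i = m}) : ℝ) := by
  refine ⟨(1/600:ℝ)^3, by positivity, ?_⟩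
  intro m hm
  show (1/600:ℝ)^3 * (m:ℝ)^3 ≤ ((S10.img A B C D E m).ncard : ℝ)
  by_cases h600 : 600 ≤ m
  · have hmain : ((m:ℝ)/600)^3 ≤ ((S10.img A B C D E m).ncard : ℝ) := by
      by_cases hC : C = 0
      · rcases h with hB | ⟨hA, hCne⟩
        · subst hC; exact S10.main_B A B D E hB m h600
        · exact absurd hC hCne
      · exact S10.main_C A B C D E hC m h600
    calc (1/600:ℝ)^3 * (m:ℝ)^3 = ((m:ℝ)/600)^3 := by ring
      _ ≤ _ := hmain
  · have h1 : 1 ≤ (S10.img A B C D E m).ncard := by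
      have hpos : 0 < (S10.img A B C D E m).ncard :=
        (Set.ncard_pos (S10.img_finite A B C D E m)).mpr (S10.img_nonempty A B C D E m hm)
      omega
    calc (1/600:ℝ)^3 * (m:ℝ)^3 = ((m:ℝ)/600)^3 := by ring
      _ ≤ 1 := by
          apply pow_le_one₀ (by positivity)
          rw [div_le_one (by norm_num)]
          have : m ≤ 600 := by omega
          exact_mod_cast this
      _ ≤ ((S10.img A B C D E m).ncard : ℝ) := by exact_mod_cast h1
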